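/- arXiv:2401.00108 — 2 statements merged into one kernel-verified Lean document; each statement's English description precedes it below -/
import Mathlib

section
/- Let F : ℝ^d → ℝ be differentiable with ‖∇F(x) − ∇F(y)‖ ≤ L‖x − y‖ for all x, y ∈ X (L > 0), and hidden convex on X with moduli μ_c > 0 and μ_H ≥ 0, and let x* ∈ X be the minimizer of F over X. Let g ∈ ℝ^d be arbitrary, let 0 < η ≤ 1/L, fix x ∈ X and set x⁺ := Π_X(x − η g). Then for every α ∈ [0,1]: F(x⁺) ≤ (1−α)F(x) + αF(x*) + (α²/(μ_c² η) − (1−α)α μ_H/2)‖c(x) − c(x*)‖² − (1/(2η) − L/2)‖x⁺ − x‖² + (η/2)‖g − ∇F(x)‖². -/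
open MeasureTheory
open scoped RealInnerProductSpace

noncomputable section

/-- `q` is the Euclidean projection of `p` onto `X`. -/
def IsProjection {d : ℕ} (X : Set (EuclideanSpace ℝ (Fin d))) (p q : EuclideanSpace ℝ (Fin d)) : Prop :=
  q ∈ X ∧ ∀ y ∈ X, ‖q - p‖ ≤ ‖y - p‖

/-- `F` is hidden convex on `X` with moduli `μc > 0` and `μH ≥ 0`, witnessed by the convex
set `U`, the bijection `c : X → U` satisfying `‖c x - c y‖ ≥ μc * ‖x - y‖`, and the
(`μH`-strongly) convex function `H : U → ℝ` with `F = H ∘ c` on `X`, where `H` attains its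
minimum over `U` at `ustar`. -/
def HiddenConvex {d : ℕ} (μc μH : ℝ) (X U : Set (EuclideanSpace ℝ (Fin d)))
    (c : EuclideanSpace ℝ (Fin d) → EuclideanSpace ℝ (Fin d)) (H F : EuclideanSpace ℝ (Fin d) → ℝ) (ustar : EuclideanSpace ℝ (Fin d)) : Prop :=
  Convex ℝ U ∧ Set.BijOn c X U ∧
    (∀ x ∈ X, ∀ y ∈ X, μc * ‖x - y‖ ≤ ‖c x - c y‖) ∧
    (∀ x ∈ X, F x = H (c x)) ∧
    (∀ u ∈ U, ∀ v ∈ U, ∀ t ∈ Set.Icc (0 : ℝ) 1,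
      H ((1 - t) • u + t • v) ≤
        (1 - t) * H u + t * H v - (1 - t) * t * μH / 2 * ‖u - v‖ ^ 2) ∧
    ustar ∈ U ∧ ∀ u ∈ U, H ustar ≤ H u


lemma lipschitz_quad {d : ℕ} {X : Set (EuclideanSpace ℝ (Fin d))} (hX : Convex ℝ X)
    {F : EuclideanSpace ℝ (Fin d) → ℝ} {F' : EuclideanSpace ℝ (Fin d) → EuclideanSpace ℝ (Fin d)}
    {L : ℝ} (hL : 0 ≤ L)
    (hgrad : ∀ y, HasGradientAt F (F' y) y)
    (hLip : ∀ u ∈ X, ∀ v ∈ X, ‖F' u - F' v‖ ≤ L * ‖u - v‖)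
    {u v : EuclideanSpace ℝ (Fin d)} (hu : u ∈ X) (hv : v ∈ X) :
    |F v - F u - ⟪F' u, v - u⟫| ≤ L / 2 * ‖v - u‖ ^ 2 := by
  set w : EuclideanSpace ℝ (Fin d) := v - u with hw
  set φ : ℝ → ℝ := fun t => ⟪F' (u + t • w), w⟫ with hφ
  have hmem : ∀ t ∈ Set.Icc (0:ℝ) 1, u + t • w ∈ X := by
    intro t ht
    have h := hX hu hv (by linarith [ht.2] : (0:ℝ) ≤ 1 - t) ht.1 (by ring)
    have he : (1 - t) • u + t • v = u + t • w := by rw [hw]; module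
    rwa [he] at h
  have hderiv : ∀ t : ℝ, HasDerivAt (fun s => F (u + s • w)) (φ t) t := by
    intro t
    have hline : HasDerivAt (fun s : ℝ => u + s • w) w t := by
      simpa using ((hasDerivAt_id t).smul_const w).const_add u
    have hF := (hgrad (u + t • w)).hasFDerivAt
    have := hF.comp_hasDerivAt t hline
    simp [InnerProductSpace.toDual_apply_apply] at this
    exact this
  have hlip' : ∀ s ∈ Set.Icc (0:ℝ) 1, ∀ t ∈ Set.Icc (0:ℝ) 1,
      |φ t - φ s| ≤ L * ‖w‖ ^ 2 * |t - s| := by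
    intro s hs t ht
    have h1 : φ t - φ s = ⟪F' (u + t • w) - F' (u + s • w), w⟫ := by
      simp [hφ, inner_sub_left]
    rw [h1]
    calc |⟪F' (u + t • w) - F' (u + s • w), w⟫| ≤ ‖F' (u + t • w) - F' (u + s • w)‖ * ‖w‖ :=
          abs_real_inner_le_norm _ _
      _ ≤ (L * ‖(u + t • w) - (u + s • w)‖) * ‖w‖ :=
          mul_le_mul_of_nonneg_right (hLip _ (hmem t ht) _ (hmem s hs)) (norm_nonneg _)
      _ = L * ‖w‖ ^ 2 * |t - s| := by
          have he : (u + t • w) - (u + s • w) = (t - s) • w := by module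
          rw [he, norm_smul]
          simp [Real.norm_eq_abs]; ring
  have hK : (0:ℝ) ≤ L * ‖w‖ ^ 2 := by positivity
  have hcont : ContinuousOn φ (Set.Icc (0:ℝ) 1) := by
    apply LipschitzOnWith.continuousOn (K := ⟨L * ‖w‖ ^ 2, hK⟩)
    apply LipschitzOnWith.of_dist_le_mul
    intro a ha b hb
    rw [Real.dist_eq, Real.dist_eq]
    exact hlip' b hb a ha
  have hint : IntervalIntegrable φ volume 0 1 := by
    apply ContinuousOn.intervalIntegrable
    rwa [Set.uIcc_of_le zero_le_one]
  have hFTC : ∫ t in (0:ℝ)..1, φ t = F v - F u := by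
    have h := intervalIntegral.integral_eq_sub_of_hasDerivAt (f := fun s => F (u + s • w))
      (fun t _ => hderiv t) hint
    have h1 : u + (1:ℝ) • w = v := by rw [hw]; module
    have h0 : u + (0:ℝ) • w = u := by module
    rw [h]
    show F (u + (1:ℝ) • w) - F (u + (0:ℝ) • w) = F v - F u
    rw [h1, h0]
  have hφ0 : φ 0 = ⟪F' u, v - u⟫ := by
    have h0 : u + (0:ℝ) • w = u := by module
    simp [hφ, h0, hw]
  have key : F v - F u - ⟪F' u, v - u⟫ = ∫ t in (0:ℝ)..1, (φ t - φ 0) := by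
    rw [intervalIntegral.integral_sub hint intervalIntegrable_const,
      intervalIntegral.integral_const, hFTC, hφ0]
    simp
  rw [key]
  have h1 : |∫ t in (0:ℝ)..1, (φ t - φ 0)| ≤ ∫ t in (0:ℝ)..1, |φ t - φ 0| :=
    intervalIntegral.abs_integral_le_integral_abs zero_le_one
  have h2 : ∫ t in (0:ℝ)..1, |φ t - φ 0| ≤ ∫ t in (0:ℝ)..1, L * ‖w‖ ^ 2 * t := by
    apply intervalIntegral.integral_mono_on zero_le_one
    · exact (hint.sub intervalIntegrable_const).abs
    · exact (continuous_const.mul continuous_id).intervalIntegrable _ _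
    · intro t ht
      have := hlip' 0 (by norm_num) t (by exact ⟨ht.1, ht.2⟩)
      rw [sub_zero, abs_of_nonneg ht.1] at this
      simpa using this
  have h3 : ∫ t in (0:ℝ)..1, L * ‖w‖ ^ 2 * t = L / 2 * ‖w‖ ^ 2 := by
    rw [intervalIntegral.integral_const_mul, integral_id]
    ring
  calc |∫ t in (0:ℝ)..1, (φ t - φ 0)| ≤ ∫ t in (0:ℝ)..1, L * ‖w‖ ^ 2 * t := le_trans h1 h2
    _ = L / 2 * ‖v - u‖ ^ 2 := by rw [h3, hw]

lemma proj_inner {d : ℕ} {X : Set (EuclideanSpace ℝ (Fin d))} (hX : Convex ℝ X)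
    {p q : EuclideanSpace ℝ (Fin d)} (hproj : q ∈ X ∧ ∀ y ∈ X, ‖q - p‖ ≤ ‖y - p‖)
    {y : EuclideanSpace ℝ (Fin d)} (hy : y ∈ X) : ⟪p - q, y - q⟫ ≤ 0 := by
  obtain ⟨hqX, hmin⟩ := hproj
  by_contra h
  push_neg at h
  set I : ℝ := ⟪p - q, y - q⟫ with hI
  set N : ℝ := ‖y - q‖ ^ 2 with hN
  have key : ∀ t ∈ Set.Ioc (0:ℝ) 1, 0 ≤ -2 * t * I + t ^ 2 * N := by
    intro t ht
    have hz : q + t • (y - q) ∈ X := by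
      have hh := hX hqX hy (by linarith [ht.2] : (0:ℝ) ≤ 1 - t) ht.1.le (by ring)
      have he : (1 - t) • q + t • y = q + t • (y - q) := by module
      rwa [he] at hh
    have h1 := hmin _ hz
    have h2 : ‖q - p‖ ^ 2 ≤ ‖(q - p) + t • (y - q)‖ ^ 2 := by
      have he : q + t • (y - q) - p = (q - p) + t • (y - q) := by module
      rw [← he]
      exact pow_le_pow_left₀ (norm_nonneg _) h1 2
    rw [norm_add_sq_real] at h2
    have h3 : ⟪q - p, t • (y - q)⟫ = -t * I := by
      rw [real_inner_smul_right]
      have : (⟪q - p, y - q⟫ : ℝ) = -I := by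
        rw [hI, ← inner_neg_left]
        congr 1; module
      rw [this]; ring
    have h4 : ‖t • (y - q)‖ ^ 2 = t ^ 2 * N := by
      rw [norm_smul, mul_pow, hN]
      simp [Real.norm_eq_abs, sq_abs]
    rw [h3, h4] at h2
    linarith
  have hN0 : 0 ≤ N := by positivity
  rcases eq_or_lt_of_le hN0 with hN1 | hN1
  · have := key 1 (by norm_num)
    rw [← hN1] at this
    nlinarith
  · set t : ℝ := min 1 (I / N) with hts
    have ht1 : t ≤ 1 := min_le_left _ _
    have ht0 : 0 < t := lt_min one_pos (div_pos h hN1)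
    have htI : t * N ≤ I := by
      have : t ≤ I / N := min_le_right _ _
      calc t * N ≤ (I / N) * N := by nlinarith
        _ = I := by field_simp
    have := key t ⟨ht0, ht1⟩
    nlinarith


set_option maxHeartbeats 1000000 in
/-- Theorem 6.2: key deterministic one-step descent inequality for projected gradient steps
with an inexact gradient estimate `g`, under hidden convexity. -/
theorem momentum_descent_inequality {d : ℕ}
    (X U : Set (EuclideanSpace ℝ (Fin d))) (hXne : X.Nonempty) (hXcl : IsClosed X) (hXcvx : Convex ℝ X)
    (F H : EuclideanSpace ℝ (Fin d) → ℝ) (c : EuclideanSpace ℝ (Fin d) → EuclideanSpace ℝ (Fin d)) (F' : EuclideanSpace ℝ (Fin d) → EuclideanSpace ℝ (Fin d))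
    (L μc μH η : ℝ) (hL : 0 < L) (hμc : 0 < μc) (hμH : 0 ≤ μH)
    (ustar xstar : EuclideanSpace ℝ (Fin d))
    (hgrad : ∀ y, HasGradientAt F (F' y) y)
    (hLip : ∀ u ∈ X, ∀ v ∈ X, ‖F' u - F' v‖ ≤ L * ‖u - v‖)
    (hHC : HiddenConvex μc μH X U c H F ustar)
    (hxstar : xstar ∈ X) (hcxstar : c xstar = ustar)
    (hη0 : 0 < η) (hη : η ≤ 1 / L)
    (g : EuclideanSpace ℝ (Fin d)) (x xplus : EuclideanSpace ℝ (Fin d)) (hx : x ∈ X)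
    (hxplus : IsProjection X (x - η • g) xplus) :
    ∀ α ∈ Set.Icc (0 : ℝ) 1,
      F xplus ≤ (1 - α) * F x + α * F xstar
        + (α ^ 2 / (μc ^ 2 * η) - (1 - α) * α * μH / 2) * ‖c x - c xstar‖ ^ 2
        - (1 / (2 * η) - L / 2) * ‖xplus - x‖ ^ 2 + η / 2 * ‖g - F' x‖ ^ 2 := by
  intro α hα
  obtain ⟨hα0, hα1⟩ := hα
  obtain ⟨hU, hBij, hc, hFH, hHcvx, hustarU, hustarmin⟩ := hHC
  obtain ⟨hxpX, hxpmin⟩ := hxplus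
  have hcxU : c x ∈ U := hBij.mapsTo hx
  have huαU : (1 - α) • (c x) + α • ustar ∈ U := hU hcxU hustarU (by linarith) hα0 (by ring)
  obtain ⟨y, hyX, hcy⟩ := hBij.surjOn huαU
  -- quadratic bounds
  have hq1 := lipschitz_quad hXcvx hL.le hgrad hLip hx hxpX
  have hq2 := lipschitz_quad hXcvx hL.le hgrad hLip hx hyX
  have f1 : F xplus ≤ F x + ⟪F' x, xplus - x⟫ + L / 2 * ‖xplus - x‖ ^ 2 := by
    have := (abs_le.mp hq1).2; linarith
  have f2 : F x + ⟪F' x, y - x⟫ - L / 2 * ‖y - x‖ ^ 2 ≤ F y := by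
    have := (abs_le.mp hq2).1; linarith
  -- projection variational inequality
  have hpr : ⟪(x - η • g) - xplus, y - xplus⟫ ≤ 0 := proj_inner hXcvx ⟨hxpX, hxpmin⟩ hyX
  have hpr' : ⟪x - xplus, y - xplus⟫ - η * ⟪g, y - xplus⟫ ≤ 0 := by
    have he : (x - η • g) - xplus = (x - xplus) - η • g := by module
    rw [he, inner_sub_left, real_inner_smul_left] at hpr
    linarith
  have hsign1 : ⟪x - xplus, xplus - y⟫ = -⟪x - xplus, y - xplus⟫ := by
    rw [← inner_neg_right]; congr 1; module
  have hsign2 : ⟪g, xplus - y⟫ = -⟪g, y - xplus⟫ := by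
    rw [← inner_neg_right]; congr 1; module
  have hpol : ‖x - y‖ ^ 2 = ‖x - xplus‖ ^ 2 + 2 * ⟪x - xplus, xplus - y⟫ + ‖xplus - y‖ ^ 2 := by
    have he : x - y = (x - xplus) + (xplus - y) := by module
    rw [he, norm_add_sq_real]
  have hxy2 : ‖x - y‖ ^ 2 = ‖y - x‖ ^ 2 := by rw [norm_sub_rev]
  have hxxp2 : ‖x - xplus‖ ^ 2 = ‖xplus - x‖ ^ 2 := by rw [norm_sub_rev]
  have f3' : 2 * η * ⟪g, xplus - y⟫ ≤ ‖y - x‖ ^ 2 - ‖xplus - x‖ ^ 2 - ‖xplus - y‖ ^ 2 := by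
    nlinarith [mul_le_mul_of_nonneg_left hpr' hη0.le]
  -- Young's inequality
  have f4' : 2 * η * ⟪F' x - g, xplus - y⟫ ≤ η ^ 2 * ‖g - F' x‖ ^ 2 + ‖xplus - y‖ ^ 2 := by
    have hcs : ⟪F' x - g, xplus - y⟫ ≤ ‖F' x - g‖ * ‖xplus - y‖ := real_inner_le_norm _ _
    have hns : ‖F' x - g‖ = ‖g - F' x‖ := norm_sub_rev _ _
    rw [hns] at hcs
    nlinarith [mul_le_mul_of_nonneg_left hcs (by positivity : (0:ℝ) ≤ 2 * η),
      sq_nonneg (η * ‖g - F' x‖ - ‖xplus - y‖)]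
  have f5 : ⟪F' x, xplus - x⟫ = ⟪F' x - g, xplus - y⟫ + ⟪g, xplus - y⟫ + ⟪F' x, y - x⟫ := by
    simp only [inner_sub_left, inner_sub_right]; ring
  -- hidden convexity
  have f6 : F y ≤ (1 - α) * F x + α * F xstar - (1 - α) * α * μH / 2 * ‖c x - c xstar‖ ^ 2 := by
    have h := hHcvx (c x) hcxU ustar hustarU α ⟨hα0, hα1⟩
    rw [hFH y hyX, hcy, hFH x hx, hFH xstar hxstar, hcxstar]
    exact h
  -- hidden strong monotonicity of c
  have f7 : μc ^ 2 * ‖y - x‖ ^ 2 ≤ α ^ 2 * ‖c x - c xstar‖ ^ 2 := by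
    have h := hc x hx y hyX
    have hcd : c x - c y = α • (c x - ustar) := by rw [hcy]; module
    have hn : ‖c x - c y‖ = α * ‖c x - c xstar‖ := by
      rw [hcd, norm_smul, Real.norm_eq_abs, abs_of_nonneg hα0, hcxstar]
    rw [hn, show ‖x - y‖ = ‖y - x‖ from norm_sub_rev _ _] at h
    nlinarith [mul_self_le_mul_self (mul_nonneg hμc.le (norm_nonneg (y - x))) h]
  -- assemble
  have c2 : F xplus ≤ F y + L / 2 * ‖y - x‖ ^ 2 + ⟪g, xplus - y⟫ + ⟪F' x - g, xplus - y⟫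
      + L / 2 * ‖xplus - x‖ ^ 2 := by linarith
  have hc2η := mul_le_mul_of_nonneg_left c2 hη0.le
  have cbig : η * F xplus ≤ η * F y + (η * L / 2) * ‖y - x‖ ^ 2 + ‖y - x‖ ^ 2 / 2
      + (η ^ 2 / 2) * ‖g - F' x‖ ^ 2 - (1 / 2 - η * L / 2) * ‖xplus - x‖ ^ 2 := by
    nlinarith [hc2η, f3', f4']
  have hηL : η * L ≤ 1 := by
    rw [le_div_iff₀ hL] at hη; linarith
  have hQhint : 0 ≤ (1 - η * L) * ‖y - x‖ ^ 2 :=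
    mul_nonneg (by linarith) (by positivity)
  have c4 : η * F xplus ≤ η * F y + ‖y - x‖ ^ 2 + (η ^ 2 / 2) * ‖g - F' x‖ ^ 2
      - (1 / 2 - η * L / 2) * ‖xplus - x‖ ^ 2 := by linarith [cbig, hQhint]
  have hc4μ := mul_le_mul_of_nonneg_left c4 (sq_nonneg μc)
  have f6μ := mul_le_mul_of_nonneg_left f6 (by positivity : (0:ℝ) ≤ μc ^ 2 * η)
  have final' : μc ^ 2 * η * F xplus ≤ μc ^ 2 * η * ((1 - α) * F x + α * F xstar)
      + (α ^ 2 - μc ^ 2 * η * ((1 - α) * α * μH / 2)) * ‖c x - c xstar‖ ^ 2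
      - (μc ^ 2 / 2 - μc ^ 2 * η * L / 2) * ‖xplus - x‖ ^ 2
      + μc ^ 2 * η * (η / 2 * ‖g - F' x‖ ^ 2) := by linarith [hc4μ, f7, f6μ]
  have hpos : (0:ℝ) < μc ^ 2 * η := by positivity
  refine le_of_mul_le_mul_left ?_ hpos
  have heq : μc ^ 2 * η * ((1 - α) * F x + α * F xstar
        + (α ^ 2 / (μc ^ 2 * η) - (1 - α) * α * μH / 2) * ‖c x - c xstar‖ ^ 2
        - (1 / (2 * η) - L / 2) * ‖xplus - x‖ ^ 2 + η / 2 * ‖g - F' x‖ ^ 2)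
      = μc ^ 2 * η * ((1 - α) * F x + α * F xstar)
      + (α ^ 2 - μc ^ 2 * η * ((1 - α) * α * μH / 2)) * ‖c x - c xstar‖ ^ 2
      - (μc ^ 2 / 2 - μc ^ 2 * η * L / 2) * ‖xplus - x‖ ^ 2
      + μc ^ 2 * η * (η / 2 * ‖g - F' x‖ ^ 2) := by
    field_simp
  linarith [final', heq.ge]
end
end

section
/- Let F : ℝ^d → ℝ be differentiable with ‖∇F(x) − ∇F(y)‖ ≤ L‖x − y‖ for all x, y ∈ ℝ^d (L > 0), and (μ_c, μ_H)-hidden strongly convex on X with μ_H > 0. Let (x^t, g^t)_{t≥0} be the projected SGD with momentum iterates with parameters β ∈ (0,1] and 0 < η ≤ β/(4L) and variance bound σ², and set Λ_t^{HB} := E[F(x^t) − F(x*) + (η/β)‖g^t − ∇F(x^t)‖²]. Then for every α with 0 < α ≤ min{β/2, μ_c² μ_H η / 4} and every T ≥ 0: Λ_T^{HB} ≤ (1 − α)^T Λ_0^{HB} + β η σ² / α. -/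
set_option maxHeartbeats 1600000

open MeasureTheory
open scoped RealInnerProductSpace

noncomputable section

/-- The filtration `𝔉_t := σ(g^0, G^1, …, G^t)` for SGD with momentum. -/
def hbFiltration {Ω : Type} [MeasurableSpace Ω] {d : ℕ}
    (g0 : Ω → EuclideanSpace ℝ (Fin d)) (G : ℕ → Ω → EuclideanSpace ℝ (Fin d)) (t : ℕ) : MeasurableSpace Ω :=
  MeasurableSpace.comap g0 inferInstance ⊔
    ⨆ i ∈ Finset.Icc 1 t, MeasurableSpace.comap (G i) inferInstance

section AuxDet
variable {E : Type*} [NormedAddCommGroup E] [InnerProductSpace ℝ E] [CompleteSpace E]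

lemma PSGDaux.smooth_ub {F : E → ℝ} {F' : E → E} {L : ℝ}
    (hgrad : ∀ y, HasGradientAt F (F' y) y)
    (hLip : ∀ u v, ‖F' u - F' v‖ ≤ L * ‖u - v‖) (a b : E) :
    F b ≤ F a + ⟪F' a, b - a⟫ + L / 2 * ‖b - a‖ ^ 2 := by
  set dd := b - a with hdd
  have hline : ∀ t : ℝ, HasDerivAt (fun s : ℝ => F (a + s • dd)) ⟪F' (a + t • dd), dd⟫ t := by
    intro t
    have h1 : HasDerivAt (fun s : ℝ => a + s • dd) dd t := by
      simpa using ((hasDerivAt_id t).smul_const dd).const_add a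
    have h2 := (hgrad (a + t • dd)).hasFDerivAt.comp_hasDerivAt t h1
    simpa [InnerProductSpace.toDual_apply_apply, Function.comp_def] using h2
  set φ : ℝ → ℝ := fun t => F (a + t • dd) - t * ⟪F' a, dd⟫ - t ^ 2 * (L * ‖dd‖ ^ 2) / 2 with hφ
  have hφd : ∀ t : ℝ, HasDerivAt φ (⟪F' (a + t • dd), dd⟫ - ⟪F' a, dd⟫ - t * (L * ‖dd‖ ^ 2)) t := by
    intro t
    have h3 : HasDerivAt (fun s : ℝ => s * ⟪F' a, dd⟫) ⟪F' a, dd⟫ t := hasDerivAt_mul_const _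
    have h4 : HasDerivAt (fun s : ℝ => s ^ 2 * (L * ‖dd‖ ^ 2) / 2) (t * (L * ‖dd‖ ^ 2)) t := by
      have h5 := ((hasDerivAt_pow 2 t).mul_const (L * ‖dd‖ ^ 2)).div_const 2
      refine h5.congr_deriv ?_
      ring
    exact ((hline t).sub h3).sub h4
  have key : φ 1 ≤ φ 0 := by
    have hcont : ContinuousOn φ (Set.Icc 0 1) := fun t _ =>
      ((hφd t).continuousAt).continuousWithinAt
    have hdiff : DifferentiableOn ℝ φ (interior (Set.Icc (0:ℝ) 1)) := fun t _ =>
      (hφd t).differentiableAt.differentiableWithinAt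
    have hder : ∀ t ∈ interior (Set.Icc (0:ℝ) 1), deriv φ t ≤ 0 := by
      intro t ht
      rw [interior_Icc] at ht
      rw [(hφd t).deriv]
      have h5 : ⟪F' (a + t • dd) - F' a, dd⟫ ≤ ‖F' (a + t • dd) - F' a‖ * ‖dd‖ :=
        real_inner_le_norm _ _
      have h6 : ‖F' (a + t • dd) - F' a‖ ≤ L * (t * ‖dd‖) := by
        have h7 := hLip (a + t • dd) a
        simpa [norm_smul, abs_of_pos ht.1] using h7
      have h8 : ⟪F' (a + t • dd) - F' a, dd⟫ = ⟪F' (a + t • dd), dd⟫ - ⟪F' a, dd⟫ :=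
        inner_sub_left _ _ _
      nlinarith [norm_nonneg dd, sq_nonneg ‖dd‖]
    have := antitoneOn_of_deriv_nonpos (convex_Icc (0:ℝ) 1) hcont hdiff hder
      (Set.left_mem_Icc.2 zero_le_one) (Set.right_mem_Icc.2 zero_le_one) zero_le_one
    exact this
  have h0 : φ 0 = F a := by simp [hφ]
  have h1 : φ 1 = F b - ⟪F' a, dd⟫ - L * ‖dd‖ ^ 2 / 2 := by
    simp [hφ, hdd]
  rw [h0, h1] at key
  linarith

lemma PSGDaux.smooth_lb {F : E → ℝ} {F' : E → E} {L : ℝ}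
    (hgrad : ∀ y, HasGradientAt F (F' y) y)
    (hLip : ∀ u v, ‖F' u - F' v‖ ≤ L * ‖u - v‖) (a b : E) :
    F a + ⟪F' a, b - a⟫ - L / 2 * ‖b - a‖ ^ 2 ≤ F b := by
  have h := PSGDaux.smooth_ub (F := fun z => -F z) (F' := fun z => -F' z) (L := L)
    (fun y => by
      rw [hasGradientAt_iff_hasFDerivAt, map_neg]
      exact (hgrad y).hasFDerivAt.neg) (fun u v => by
      rw [show -F' u - -F' v = -(F' u - F' v) by abel, norm_neg]; exact hLip u v) a b
  simp only [inner_neg_left] at h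
  linarith

lemma PSGDaux.proj_vi {d : ℕ} {X : Set (EuclideanSpace ℝ (Fin d))} (hXcvx : Convex ℝ X)
    {p q : EuclideanSpace ℝ (Fin d)}
    (hq : IsProjection X p q) : ∀ y ∈ X, ⟪p - q, y - q⟫ ≤ 0 := by
  haveI : Nonempty X := ⟨⟨q, hq.1⟩⟩
  have hinf : ‖p - q‖ = ⨅ w : X, ‖p - w‖ := by
    refine le_antisymm (le_ciInf fun w => ?_) ?_
    · have h := hq.2 w w.2
      rwa [norm_sub_rev q p, norm_sub_rev (w : EuclideanSpace ℝ (Fin d)) p] at h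
    · exact ciInf_le ⟨0, fun r ⟨w, hw⟩ => hw ▸ norm_nonneg _⟩ (⟨q, hq.1⟩ : X)
  exact (norm_eq_iInf_iff_real_inner_le_zero hXcvx hq.1).1 hinf

lemma PSGDaux.step_det {d : ℕ} {X U : Set (EuclideanSpace ℝ (Fin d))} (hXcvx : Convex ℝ X)
    {F H : EuclideanSpace ℝ (Fin d) → ℝ} {c F' : EuclideanSpace ℝ (Fin d) → EuclideanSpace ℝ (Fin d)}
    {L μc μH η α : ℝ} (hL : 0 < L) (hμc : 0 < μc) (hμH : 0 < μH)
    {ustar xstar : EuclideanSpace ℝ (Fin d)}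
    (hgrad : ∀ y, HasGradientAt F (F' y) y)
    (hLip : ∀ u v, ‖F' u - F' v‖ ≤ L * ‖u - v‖)
    (hU : Convex ℝ U) (hbij : Set.BijOn c X U)
    (hexp : ∀ x ∈ X, ∀ y ∈ X, μc * ‖x - y‖ ≤ ‖c x - c y‖)
    (hFH : ∀ x ∈ X, F x = H (c x))
    (hsc : ∀ u ∈ U, ∀ v ∈ U, ∀ t ∈ Set.Icc (0 : ℝ) 1,
      H ((1 - t) • u + t • v) ≤ (1 - t) * H u + t * H v - (1 - t) * t * μH / 2 * ‖u - v‖ ^ 2)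
    (hust : ustar ∈ U)
    (hxstar : xstar ∈ X) (hcxstar : c xstar = ustar)
    (hη0 : 0 < η) (hLη : L * η ≤ 1 / 4)
    (hα0 : 0 < α) (hα1 : α ≤ 1 / 2) (hα2 : α ≤ μc ^ 2 * μH * η / 4)
    (xx gg xp : EuclideanSpace ℝ (Fin d)) (hx : xx ∈ X) (hproj : IsProjection X (xx - η • gg) xp) :
    F xp - F xstar ≤ (1 - α) * (F xx - F xstar) + η / 2 * ‖gg - F' xx‖ ^ 2
      - (1 / (2 * η) - L / 2) * ‖xp - xx‖ ^ 2 := by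
  set u := c xx with hu
  have huU : u ∈ U := hbij.mapsTo hx
  have hwU : (1 - α) • u + α • ustar ∈ U := hU huU hust (by linarith) hα0.le (by ring)
  obtain ⟨y, hyX, hcy⟩ := hbij.surjOn hwU
  have hsc' := hsc u huU ustar hust α ⟨hα0.le, by linarith⟩
  have hHust : H ustar = F xstar := by rw [hFH xstar hxstar, hcxstar]
  have hHu : H u = F xx := (hFH xx hx).symm
  rw [hHu, hHust] at hsc'
  have hFyb : F y ≤ (1 - α) * F xx + α * F xstar
      - (1 - α) * α * μH / 2 * ‖u - ustar‖ ^ 2 := by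
    rw [hFH y hyX, hcy]; exact hsc'
  have hdist : μc * ‖xx - y‖ ≤ α * ‖u - ustar‖ := by
    have h := hexp xx hx y hyX
    have hcc : c xx - c y = α • (u - ustar) := by
      rw [hcy, ← hu, smul_sub, sub_smul, one_smul]; abel
    calc μc * ‖xx - y‖ ≤ ‖c xx - c y‖ := h
      _ = α * ‖u - ustar‖ := by
          rw [hcc, norm_smul, Real.norm_eq_abs, abs_of_pos hα0]
  have hm2 : ‖xx - y‖ ^ 2 ≤ (α / μc) ^ 2 * ‖u - ustar‖ ^ 2 := by
    have h1 : ‖xx - y‖ ≤ (α / μc) * ‖u - ustar‖ := by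
      rw [div_mul_eq_mul_div, le_div_iff₀ hμc]
      linarith [hdist]
    nlinarith [norm_nonneg (u - ustar), norm_nonneg (xx - y), div_nonneg hα0.le hμc.le]
  have hκ0 : (0:ℝ) < 1 / (2 * η) := by positivity
  have hcoefpos : (0:ℝ) ≤ L / 2 + 1 / (2 * η) := by linarith
  have hm2' : (L / 2 + 1 / (2 * η)) * ‖xx - y‖ ^ 2
      ≤ (L / 2 + 1 / (2 * η)) * ((α / μc) ^ 2 * ‖u - ustar‖ ^ 2) :=
    mul_le_mul_of_nonneg_left hm2 hcoefpos
  have hkey : (L / 2 + 1 / (2 * η)) * (α / μc ^ 2) ≤ (1 - α) * μH / 2 := by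
    have hαμ : α / μc ^ 2 ≤ μH * η / 4 := by
      rw [div_le_iff₀ (by positivity)]; nlinarith
    have hA0 : (0:ℝ) ≤ α / μc ^ 2 := by positivity
    have h9 : α / μc ^ 2 * (1 / (2 * η)) ≤ μH / 8 := by
      rw [show α / μc ^ 2 * (1 / (2 * η)) = α / μc ^ 2 / (2 * η) by ring,
        div_le_iff₀ (by positivity)]
      nlinarith
    have h10 : L / 2 * (α / μc ^ 2) ≤ μH / 32 := by
      have h11 : L / 2 * (α / μc ^ 2) ≤ L / 2 * (μH * η / 4) :=
        mul_le_mul_of_nonneg_left hαμ (by linarith)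
      nlinarith
    have h12 : α * μH ≤ μH / 2 := by nlinarith
    have h13 : (L / 2 + 1 / (2 * η)) * (α / μc ^ 2)
        = L / 2 * (α / μc ^ 2) + α / μc ^ 2 * (1 / (2 * η)) := by ring
    rw [h13]
    linarith [h9, h10]
  have hcoef : (L / 2 + 1 / (2 * η)) * ((α / μc) ^ 2 * ‖u - ustar‖ ^ 2)
      ≤ (1 - α) * α * μH / 2 * ‖u - ustar‖ ^ 2 := by
    have h6 := mul_le_mul_of_nonneg_right hkey
      (show (0:ℝ) ≤ α * ‖u - ustar‖ ^ 2 by positivity)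
    calc (L / 2 + 1 / (2 * η)) * ((α / μc) ^ 2 * ‖u - ustar‖ ^ 2)
        = (L / 2 + 1 / (2 * η)) * (α / μc ^ 2) * (α * ‖u - ustar‖ ^ 2) := by
          field_simp
      _ ≤ (1 - α) * μH / 2 * (α * ‖u - ustar‖ ^ 2) := h6
      _ = (1 - α) * α * μH / 2 * ‖u - ustar‖ ^ 2 := by ring
  have hmD := hm2'.trans hcoef
  have hs1 := PSGDaux.smooth_ub hgrad hLip xx xp
  have hs2 := PSGDaux.smooth_lb hgrad hLip xx y
  have hvi := PSGDaux.proj_vi hXcvx hproj y hyX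
  have hvi' : ⟪xx - xp, y - xp⟫ - η * ⟪gg, y - xp⟫ ≤ 0 := by
    have hrw : xx - η • gg - xp = (xx - xp) - η • gg := by abel
    rw [hrw, inner_sub_left, real_inner_smul_left] at hvi
    exact hvi
  have hpol : 2 * ⟪xx - xp, y - xp⟫ = ‖xp - xx‖ ^ 2 + ‖y - xp‖ ^ 2 - ‖xx - y‖ ^ 2 := by
    have h := @norm_sub_sq_real (EuclideanSpace ℝ (Fin d)) _ _ (xx - xp) (y - xp)
    rw [show (xx - xp) - (y - xp) = xx - y by abel] at h
    rw [show ‖xx - xp‖ = ‖xp - xx‖ from norm_sub_rev _ _] at h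
    linarith
  have hIg : ⟪gg, xp - y⟫ ≤ (‖xx - y‖ ^ 2 - ‖xp - xx‖ ^ 2 - ‖y - xp‖ ^ 2) / (2 * η) := by
    rw [le_div_iff₀ (by positivity)]
    have hneg : ⟪gg, xp - y⟫ = -⟪gg, y - xp⟫ := by
      rw [← inner_neg_right]; congr 1; abel
    rw [hneg]
    nlinarith [hvi', hpol]
  have hYoung : -⟪gg - F' xx, xp - y⟫ ≤ η / 2 * ‖gg - F' xx‖ ^ 2
      + 1 / (2 * η) * ‖y - xp‖ ^ 2 := by
    have h2 : -⟪gg - F' xx, xp - y⟫ ≤ ‖gg - F' xx‖ * ‖xp - y‖ := by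
      have := abs_real_inner_le_norm (gg - F' xx) (xp - y)
      have h7 := neg_abs_le ⟪gg - F' xx, xp - y⟫
      linarith
    have hnq : ‖xp - y‖ = ‖y - xp‖ := norm_sub_rev _ _
    rw [hnq] at h2
    have h4 : -⟪gg - F' xx, xp - y⟫
        ≤ (η ^ 2 * ‖gg - F' xx‖ ^ 2 + ‖y - xp‖ ^ 2) / (2 * η) := by
      rw [le_div_iff₀ (by positivity)]
      nlinarith [h2, sq_nonneg (η * ‖gg - F' xx‖ - ‖y - xp‖)]
    have h5 : (η ^ 2 * ‖gg - F' xx‖ ^ 2 + ‖y - xp‖ ^ 2) / (2 * η)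
        = η / 2 * ‖gg - F' xx‖ ^ 2 + 1 / (2 * η) * ‖y - xp‖ ^ 2 := by
      field_simp
    linarith
  have hd1 : ⟪F' xx, xp - xx⟫ = ⟪F' xx, xp - y⟫ + ⟪F' xx, y - xx⟫ := by
    rw [← inner_add_right]; congr 1; abel
  have hd2 : ⟪F' xx, xp - y⟫ = ⟪gg, xp - y⟫ - ⟪gg - F' xx, xp - y⟫ := by
    rw [inner_sub_left]; ring
  have hny : ‖y - xx‖ = ‖xx - y‖ := norm_sub_rev _ _
  rw [hny] at hs2
  have hIg' : ⟪gg, xp - y⟫ ≤ 1 / (2 * η) * ‖xx - y‖ ^ 2 - 1 / (2 * η) * ‖xp - xx‖ ^ 2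
      - 1 / (2 * η) * ‖y - xp‖ ^ 2 := by
    have h8 : (‖xx - y‖ ^ 2 - ‖xp - xx‖ ^ 2 - ‖y - xp‖ ^ 2) / (2 * η)
        = 1 / (2 * η) * ‖xx - y‖ ^ 2 - 1 / (2 * η) * ‖xp - xx‖ ^ 2
          - 1 / (2 * η) * ‖y - xp‖ ^ 2 := by ring
    linarith [hIg]
  linarith [hs1, hs2, hFyb, hmD, hIg', hYoung, hd1, hd2]

end AuxDet

section AuxStoch
variable {α : Type*} {m m0 : MeasurableSpace α} {μ : Measure α}
variable {E F : Type*} [NormedAddCommGroup E] [NormedSpace ℝ E] [CompleteSpace E]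
  [NormedAddCommGroup F] [NormedSpace ℝ F] [CompleteSpace F]

lemma PSGDaux.condexp_clm (hm : m ≤ m0) {μ : Measure α} [IsFiniteMeasure μ]
    (T : E →L[ℝ] F) {f : α → E} (hf : Integrable f μ) :
    μ[fun ω => T (f ω)|m] =ᵐ[μ] fun ω => T ((μ[f|m]) ω) := by
  haveI : SigmaFinite (μ.trim hm) := by
    haveI := isFiniteMeasure_trim (μ := μ) hm
    infer_instance
  refine (ae_eq_condExp_of_forall_setIntegral_eq hm (T.integrable_comp hf)
    (fun s _ _ => (T.integrable_comp integrable_condExp).integrableOn)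
    (fun s hs hμs => ?_) ?_).symm
  · rw [T.integral_comp_comm integrable_condExp.integrableOn,
      setIntegral_condExp hm hf hs, T.integral_comp_comm hf.integrableOn]
  · exact (T.continuous.comp_stronglyMeasurable stronglyMeasurable_condExp).aestronglyMeasurable

variable {E' : Type*} [NormedAddCommGroup E'] [InnerProductSpace ℝ E']

lemma PSGDaux.integrable_inner_of_memL2 {f w : α → E'} {μ : Measure α}
    (hf : MemLp f 2 μ) (hw : MemLp w 2 μ) :
    Integrable (fun ω => ⟪f ω, w ω⟫) μ := by
  refine Integrable.mono' (((hf.norm.integrable_sq).add (hw.norm.integrable_sq)).div_const 2)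
    (hf.1.inner hw.1) (Filter.Eventually.of_forall fun ω => ?_)
  have h1 := abs_real_inner_le_norm (f ω) (w ω)
  have h2 : ‖f ω‖ * ‖w ω‖ ≤ (‖f ω‖ ^ 2 + ‖w ω‖ ^ 2) / 2 := by
    nlinarith [sq_nonneg (‖f ω‖ - ‖w ω‖)]
  rw [Real.norm_eq_abs]
  simp only [Pi.add_apply]
  linarith

lemma PSGDaux.integrable_mul_of_memL2 {f w : α → ℝ} {μ : Measure α}
    (hf : MemLp f 2 μ) (hw : MemLp w 2 μ) :
    Integrable (fun ω => f ω * w ω) μ := by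
  refine Integrable.mono' (((hf.norm.integrable_sq).add (hw.norm.integrable_sq)).div_const 2)
    (hf.1.mul hw.1) (Filter.Eventually.of_forall fun ω => ?_)
  have h1 : |f ω * w ω| = |f ω| * |w ω| := abs_mul _ _
  have h2 : |f ω| * |w ω| ≤ (|f ω| ^ 2 + |w ω| ^ 2) / 2 := by
    nlinarith [sq_nonneg (|f ω| - |w ω|)]
  rw [Real.norm_eq_abs, h1]
  simp only [Pi.add_apply, Real.norm_eq_abs]
  calc |f ω| * |w ω| ≤ (|f ω| ^ 2 + |w ω| ^ 2) / 2 := h2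
    _ = (‖f ω‖ ^ 2 + ‖w ω‖ ^ 2) / 2 := by rw [Real.norm_eq_abs, Real.norm_eq_abs]
    _ = _ := by norm_num

lemma PSGDaux.norm_comb_sq (a b : ℝ) (v w : E') :
    ‖a • v + b • w‖ ^ 2 = a ^ 2 * ‖v‖ ^ 2 + 2 * (a * b) * ⟪v, w⟫ + b ^ 2 * ‖w‖ ^ 2 := by
  rw [@norm_add_sq_real, real_inner_smul_left, real_inner_smul_right,
    norm_smul, norm_smul, Real.norm_eq_abs, Real.norm_eq_abs, mul_pow, mul_pow, sq_abs, sq_abs]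
  ring

lemma PSGDaux.young2 {β A B : ℝ} (hβ0 : 0 < β) (hβ1 : β ≤ 1) :
    (1 - β) ^ 2 * (A + B) ^ 2 ≤ (1 - β) * A ^ 2 + (1 - β) ^ 2 / β * B ^ 2 := by
  have key : (1 - β) * A ^ 2 + (1 - β) ^ 2 / β * B ^ 2 - (1 - β) ^ 2 * (A + B) ^ 2
      = (1 - β) * (β * A - (1 - β) * B) ^ 2 / β := by
    field_simp
    ring
  have h2 : 0 ≤ (1 - β) * (β * A - (1 - β) * B) ^ 2 / β :=
    div_nonneg (mul_nonneg (by linarith) (sq_nonneg _)) hβ0.le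
  linarith
end AuxStoch

/-- Theorem 6.4: last-iterate convergence of projected SGD with Polyak momentum in the
hidden strongly convex setting (`μ_H > 0`). -/
theorem psgd_momentum_convergence_hidden_strongly_convex {d : ℕ}
    {Ω : Type} [MeasurableSpace Ω] (μ : Measure Ω) [IsProbabilityMeasure μ]
    (X U : Set (EuclideanSpace ℝ (Fin d))) (hXne : X.Nonempty) (hXcl : IsClosed X) (hXcvx : Convex ℝ X)
    (F H : EuclideanSpace ℝ (Fin d) → ℝ) (c : EuclideanSpace ℝ (Fin d) → EuclideanSpace ℝ (Fin d)) (F' : EuclideanSpace ℝ (Fin d) → EuclideanSpace ℝ (Fin d))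
    (L μc μH η β σ : ℝ) (hL : 0 < L) (hμc : 0 < μc) (hμH : 0 < μH)
    (ustar xstar : EuclideanSpace ℝ (Fin d))
    (hgrad : ∀ y, HasGradientAt F (F' y) y)
    (hLip : ∀ u v : EuclideanSpace ℝ (Fin d), ‖F' u - F' v‖ ≤ L * ‖u - v‖)
    (hHC : HiddenConvex μc μH X U c H F ustar)
    (hxstar : xstar ∈ X) (hcxstar : c xstar = ustar)
    (hβ : β ∈ Set.Ioc (0 : ℝ) 1) (hη0 : 0 < η) (hη : η ≤ β / (4 * L))
    (x g G : ℕ → Ω → EuclideanSpace ℝ (Fin d)) (x0 : EuclideanSpace ℝ (Fin d)) (hx0X : x0 ∈ X) (hx0 : ∀ ω, x 0 ω = x0)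
    (hg0meas : Measurable (g 0)) (hg0L2 : MemLp (g 0) 2 μ)
    (hGmeas : ∀ t, Measurable (G (t + 1))) (hGL2 : ∀ t, MemLp (G (t + 1)) 2 μ)
    (hrecx : ∀ t ω, IsProjection X (x t ω - η • g t ω) (x (t + 1) ω))
    (hrecg : ∀ t ω, g (t + 1) ω = (1 - β) • g t ω + β • G (t + 1) ω)
    (hadapt : ∀ t, @Measurable Ω (EuclideanSpace ℝ (Fin d)) (hbFiltration (g 0) G t) _ (x (t + 1)))
    (hcond : ∀ t, μ[G (t + 1) | hbFiltration (g 0) G t] =ᵐ[μ]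
      fun ω => F' (x (t + 1) ω))
    (hvar : ∀ t, ∀ᵐ ω ∂μ,
      (μ[(fun ω' => ‖G (t + 1) ω' - F' (x (t + 1) ω')‖ ^ 2) |
        hbFiltration (g 0) G t]) ω ≤ σ ^ 2) :
    ∀ α : ℝ, 0 < α → α ≤ min (β / 2) (μc ^ 2 * μH * η / 4) → ∀ T : ℕ,
      (∫ ω, (F (x T ω) - F xstar + η / β * ‖g T ω - F' (x T ω)‖ ^ 2) ∂μ) ≤
        (1 - α) ^ T *
            (∫ ω, (F (x 0 ω) - F xstar + η / β * ‖g 0 ω - F' (x 0 ω)‖ ^ 2) ∂μ)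
          + β * η * σ ^ 2 / α := by
  intro α hα0 hαle T
  obtain ⟨hUcvx, hbij, hexp, hFH, hsc, hust, hmin⟩ := hHC
  have hβ0 : (0:ℝ) < β := hβ.1
  have hβ1 : β ≤ 1 := hβ.2
  have hαβ : α ≤ β / 2 := le_trans hαle (min_le_left _ _)
  have hαμ : α ≤ μc ^ 2 * μH * η / 4 := le_trans hαle (min_le_right _ _)
  have hα1 : α ≤ 1 / 2 := by linarith
  have hLη : L * η ≤ 1 / 4 := by
    have h1 : η * (4 * L) ≤ β := (le_div_iff₀ (by positivity)).mp hη
    nlinarith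
  -- filtration facts
  have hGmeas' : ∀ i, 1 ≤ i → Measurable (G i) := by
    intro i hi
    obtain ⟨j, rfl⟩ := Nat.exists_eq_add_of_le hi
    rw [Nat.add_comm]
    exact hGmeas j
  have hmle : ∀ t, hbFiltration (g 0) G t ≤ (inferInstance : MeasurableSpace Ω) := by
    intro t
    apply sup_le
    · exact measurable_iff_comap_le.mp hg0meas
    · refine iSup_le fun i => iSup_le fun hi => ?_
      exact measurable_iff_comap_le.mp (hGmeas' i (Finset.mem_Icc.mp hi).1)
  have hmono : ∀ {s t : ℕ}, s ≤ t → hbFiltration (g 0) G s ≤ hbFiltration (g 0) G t := by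
    intro s t hst
    refine sup_le_sup le_rfl ?_
    refine iSup_le fun i => iSup_le fun hi => ?_
    have hi' : i ∈ Finset.Icc 1 t :=
      Finset.mem_Icc.mpr ⟨(Finset.mem_Icc.mp hi).1, le_trans (Finset.mem_Icc.mp hi).2 hst⟩
    exact le_iSup₂ (f := fun i (_ : i ∈ Finset.Icc 1 t) =>
      MeasurableSpace.comap (G i) inferInstance) i hi'
  have hG_le : ∀ t : ℕ, MeasurableSpace.comap (G (t+1)) inferInstance ≤ hbFiltration (g 0) G (t+1) := by
    intro t
    refine le_sup_of_le_right ?_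
    exact le_iSup₂ (f := fun i (_ : i ∈ Finset.Icc 1 (t+1)) =>
      MeasurableSpace.comap (G i) inferInstance) (t+1) (Finset.mem_Icc.mpr ⟨by omega, le_rfl⟩)
  have hgadapt : ∀ t, @Measurable Ω (EuclideanSpace ℝ (Fin d)) (hbFiltration (g 0) G t) _ (g t) := by
    intro t
    induction t with
    | zero => exact measurable_iff_comap_le.mpr le_sup_left
    | succ t ih =>
      have hgt : g (t+1) = fun ω => (1 - β) • g t ω + β • G (t+1) ω := funext (hrecg t)
      rw [hgt]
      exact ((ih.mono (hmono t.le_succ) le_rfl).const_smul (1-β)).add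
        ((measurable_iff_comap_le.mpr (hG_le t)).const_smul β)
  have hgmeas : ∀ t, Measurable (g t) := fun t => (hgadapt t).mono (hmle t) le_rfl
  have hxmeas : ∀ t, Measurable (x t) := by
    intro t
    cases t with
    | zero => rw [show x 0 = fun _ => x0 from funext hx0]; exact measurable_const
    | succ t => exact (hadapt t).mono (hmle t) le_rfl
  -- continuity of F and F'
  have hF'cont : Continuous F' := by
    have hlip : LipschitzWith (Real.toNNReal L) F' := by
      apply LipschitzWith.of_dist_le_mul
      intro u v
      rw [dist_eq_norm, dist_eq_norm]
      calc ‖F' u - F' v‖ ≤ L * ‖u - v‖ := hLip u v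
        _ = (Real.toNNReal L : ℝ) * ‖u - v‖ := by rw [Real.coe_toNNReal L hL.le]
    exact hlip.continuous
  have hFdiff : Differentiable ℝ F := fun y => ((hgrad y).hasFDerivAt).differentiableAt
  have hFcont : Continuous F := hFdiff.continuous
  have hxX : ∀ t ω, x t ω ∈ X := by
    intro t ω
    cases t with
    | zero => rw [hx0 ω]; exact hx0X
    | succ t => exact (hrecx t ω).1
  -- L² facts
  have hgL2 : ∀ t, MemLp (g t) 2 μ := by
    intro t
    induction t with
    | zero => exact hg0L2
    | succ t ih =>
      rw [show g (t+1) = fun ω => (1 - β) • g t ω + β • G (t+1) ω from funext (hrecg t)]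
      exact (ih.const_smul (1-β)).add ((hGL2 t).const_smul β)
  have hxL2 : ∀ t, MemLp (x t) 2 μ := by
    intro t
    induction t with
    | zero => rw [show x 0 = fun _ => x0 from funext hx0]; exact memLp_const x0
    | succ t ih =>
      refine MemLp.of_le ((memLp_const ‖x0‖).add
        ((ih.norm.const_mul 2).add ((hgL2 t).norm.const_mul (2*η))))
        (hxmeas (t+1)).aestronglyMeasurable
        (Filter.Eventually.of_forall fun ω => ?_)
      have h1 : ‖x (t+1) ω - (x t ω - η • g t ω)‖ ≤ ‖x0 - (x t ω - η • g t ω)‖ :=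
        (hrecx t ω).2 x0 hx0X
      have h2 : ‖x t ω - η • g t ω‖ ≤ ‖x t ω‖ + η * ‖g t ω‖ := by
        calc ‖x t ω - η • g t ω‖ ≤ ‖x t ω‖ + ‖η • g t ω‖ := norm_sub_le _ _
          _ = ‖x t ω‖ + η * ‖g t ω‖ := by rw [norm_smul, Real.norm_eq_abs, abs_of_pos hη0]
      have h3 : ‖x (t+1) ω‖ ≤ ‖x0‖ + 2 * ‖x t ω‖ + 2 * η * ‖g t ω‖ := by
        have h4 : ‖x (t+1) ω‖ ≤ ‖x (t+1) ω - (x t ω - η • g t ω)‖ + ‖x t ω - η • g t ω‖ := by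
          have h4a := norm_add_le (x (t+1) ω - (x t ω - η • g t ω)) (x t ω - η • g t ω)
          rw [show (x (t+1) ω - (x t ω - η • g t ω)) + (x t ω - η • g t ω) = x (t+1) ω
            by abel] at h4a
          exact h4a
        have h5 : ‖x0 - (x t ω - η • g t ω)‖ ≤ ‖x0‖ + ‖x t ω - η • g t ω‖ := norm_sub_le _ _
        linarith
      have h6 : ‖x0‖ + (2 * ‖x t ω‖ + 2 * η * ‖g t ω‖)
          ≤ ‖(fun ω => ‖x0‖ + (2 * ‖x t ω‖ + 2 * η * ‖g t ω‖)) ω‖ := le_abs_self _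
      simp only [Pi.add_apply] at h6 ⊢
      calc ‖x (t+1) ω‖ ≤ ‖x0‖ + (2 * ‖x t ω‖ + 2 * η * ‖g t ω‖) := by linarith
        _ ≤ _ := le_abs_self _
  have hF'xL2 : ∀ t, MemLp (fun ω => F' (x t ω)) 2 μ := by
    intro t
    refine MemLp.of_le ((memLp_const ‖F' 0‖).add ((hxL2 t).norm.const_mul L))
      (hF'cont.comp_aestronglyMeasurable (hxL2 t).aestronglyMeasurable)
      (Filter.Eventually.of_forall fun ω => ?_)
    have h1 : ‖F' (x t ω)‖ ≤ ‖F' 0‖ + L * ‖x t ω‖ := by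
      have h2 : ‖F' (x t ω) - F' 0‖ ≤ L * ‖x t ω - 0‖ := hLip _ _
      rw [sub_zero] at h2
      have h3 : ‖F' (x t ω)‖ ≤ ‖F' 0‖ + ‖F' (x t ω) - F' 0‖ := by
        have h3a := norm_add_le (F' 0) (F' (x t ω) - F' 0)
        rw [show F' 0 + (F' (x t ω) - F' 0) = F' (x t ω) by abel] at h3a
        exact h3a
      linarith
    simp only [Pi.add_apply]
    calc ‖F' (x t ω)‖ ≤ ‖F' 0‖ + L * ‖x t ω‖ := h1
      _ ≤ _ := le_abs_self _
  have heL2 : ∀ t, MemLp (fun ω => g t ω - F' (x t ω)) 2 μ :=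
    fun t => (hgL2 t).sub (hF'xL2 t)
  have heInt : ∀ t, Integrable (fun ω => ‖g t ω - F' (x t ω)‖ ^ 2) μ :=
    fun t => (heL2 t).norm.integrable_sq
  have hFxInt : ∀ t, Integrable (fun ω => F (x t ω)) μ := by
    intro t
    have hdL2 : MemLp (fun ω => x t ω - x0) 2 μ := (hxL2 t).sub (memLp_const x0)
    refine Integrable.mono' ((integrable_const |F x0|).add
      (((hdL2.norm.integrable one_le_two |>.const_mul ‖F' x0‖).add
        (hdL2.norm.integrable_sq.const_mul (L/2)))))
      (hFcont.comp_aestronglyMeasurable (hxL2 t).aestronglyMeasurable)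
      (Filter.Eventually.of_forall fun ω => ?_)
    have hub := PSGDaux.smooth_ub hgrad hLip x0 (x t ω)
    have hlb := PSGDaux.smooth_lb hgrad hLip x0 (x t ω)
    have hcs := abs_real_inner_le_norm (F' x0) (x t ω - x0)
    have habs := abs_le.mp (le_refl |⟪F' x0, x t ω - x0⟫|)
    simp only [Pi.add_apply]
    rw [Real.norm_eq_abs, abs_le]
    constructor
    · nlinarith [neg_abs_le (F x0), neg_abs_le ⟪F' x0, x t ω - x0⟫]
    · nlinarith [le_abs_self (F x0), le_abs_self ⟪F' x0, x t ω - x0⟫]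
  have hr2Int : ∀ t, Integrable (fun ω => ‖x (t+1) ω - x t ω‖ ^ 2) μ :=
    fun t => ((hxL2 (t+1)).sub (hxL2 t)).norm.integrable_sq
  have hFsubInt : ∀ t, Integrable (fun ω => F (x t ω) - F xstar) μ :=
    fun t => (hFxInt t).sub (integrable_const _)
  -- ONE-STEP INEQUALITY FOR A
  have hstepA : ∀ t, (∫ ω, (F (x (t+1) ω) - F xstar) ∂μ)
      ≤ (1 - α) * (∫ ω, (F (x t ω) - F xstar) ∂μ)
        + η / 2 * (∫ ω, ‖g t ω - F' (x t ω)‖ ^ 2 ∂μ)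
        - (1 / (2 * η) - L / 2) * (∫ ω, ‖x (t+1) ω - x t ω‖ ^ 2 ∂μ) := by
    intro t
    have hpt : ∀ ω, F (x (t+1) ω) - F xstar ≤
        (1 - α) * (F (x t ω) - F xstar) + η / 2 * ‖g t ω - F' (x t ω)‖ ^ 2
          - (1 / (2 * η) - L / 2) * ‖x (t+1) ω - x t ω‖ ^ 2 := fun ω =>
      PSGDaux.step_det hXcvx hL hμc hμH hgrad hLip hUcvx hbij hexp hFH hsc hust hxstar hcxstar
        hη0 hLη hα0 hα1 hαμ (x t ω) (g t ω) (x (t+1) ω) (hxX t ω) (hrecx t ω)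
    have hia : Integrable (fun ω => (1 - α) * (F (x t ω) - F xstar)) μ :=
      (hFsubInt t).const_mul (1 - α)
    have hib : Integrable (fun ω => η / 2 * ‖g t ω - F' (x t ω)‖ ^ 2) μ :=
      (heInt t).const_mul (η / 2)
    have hic : Integrable (fun ω => (1 / (2 * η) - L / 2) * ‖x (t+1) ω - x t ω‖ ^ 2) μ :=
      (hr2Int t).const_mul (1 / (2 * η) - L / 2)
    have hint2 : Integrable (fun ω => (1 - α) * (F (x t ω) - F xstar)
        + η / 2 * ‖g t ω - F' (x t ω)‖ ^ 2
        - (1 / (2 * η) - L / 2) * ‖x (t+1) ω - x t ω‖ ^ 2) μ := (hia.add hib).sub hic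
    have hiab : Integrable (fun ω => (1 - α) * (F (x t ω) - F xstar)
        + η / 2 * ‖g t ω - F' (x t ω)‖ ^ 2) μ := hia.add hib
    have h3 := integral_mono (hFsubInt (t+1)) hint2 hpt
    rw [integral_sub hiab hic] at h3
    rw [integral_add hia hib, integral_const_mul, integral_const_mul, integral_const_mul] at h3
    exact h3
  -- ONE-STEP INEQUALITY FOR B
  have hstepB : ∀ t, (∫ ω, ‖g (t+1) ω - F' (x (t+1) ω)‖ ^ 2 ∂μ)
      ≤ (1 - β) * (∫ ω, ‖g t ω - F' (x t ω)‖ ^ 2 ∂μ)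
        + (1 - β) ^ 2 / β * L ^ 2 * (∫ ω, ‖x (t+1) ω - x t ω‖ ^ 2 ∂μ)
        + β ^ 2 * σ ^ 2 := by
    intro t
    haveI hfin := isFiniteMeasure_trim (μ := μ) (hmle t)
    haveI hsf : SigmaFinite (μ.trim (hmle t)) := inferInstance
    have hvL2 : MemLp (fun ω => g t ω - F' (x (t+1) ω)) 2 μ := (hgL2 t).sub (hF'xL2 (t+1))
    have hwL2 : MemLp (fun ω => G (t+1) ω - F' (x (t+1) ω)) 2 μ := (hGL2 t).sub (hF'xL2 (t+1))
    have hwInt : Integrable (fun ω => G (t+1) ω - F' (x (t+1) ω)) μ := hwL2.integrable one_le_two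
    have hv2Int : Integrable (fun ω => ‖g t ω - F' (x (t+1) ω)‖ ^ 2) μ := hvL2.norm.integrable_sq
    have hw2Int : Integrable (fun ω => ‖G (t+1) ω - F' (x (t+1) ω)‖ ^ 2) μ :=
      hwL2.norm.integrable_sq
    have hvwInt : Integrable
        (fun ω => ⟪g t ω - F' (x (t+1) ω), G (t+1) ω - F' (x (t+1) ω)⟫) μ :=
      PSGDaux.integrable_inner_of_memL2 hvL2 hwL2
    -- measurability w.r.t. the filtration
    have hx1m : @Measurable Ω (EuclideanSpace ℝ (Fin d)) (hbFiltration (g 0) G t) _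
        (fun ω => F' (x (t+1) ω)) := hF'cont.measurable.comp (hadapt t)
    have hvm : @Measurable Ω (EuclideanSpace ℝ (Fin d)) (hbFiltration (g 0) G t) _
        (fun ω => g t ω - F' (x (t+1) ω)) := (hgadapt t).sub hx1m
    -- conditional expectation of the noise is zero
    have hcondF : μ[(fun ω => F' (x (t+1) ω))|hbFiltration (g 0) G t]
        = fun ω => F' (x (t+1) ω) :=
      condExp_of_stronglyMeasurable (hmle t) hx1m.stronglyMeasurable
        ((hF'xL2 (t+1)).integrable one_le_two)
    have hcondw : μ[(fun ω => G (t+1) ω - F' (x (t+1) ω))|hbFiltration (g 0) G t]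
        =ᵐ[μ] (fun _ => (0 : EuclideanSpace ℝ (Fin d))) := by
      have h1 : (fun ω => G (t+1) ω - F' (x (t+1) ω))
          = G (t+1) - fun ω => F' (x (t+1) ω) := rfl
      rw [h1]
      have h2 := condExp_sub (m := hbFiltration (g 0) G t) (μ := μ)
        ((hGL2 t).integrable one_le_two) ((hF'xL2 (t+1)).integrable one_le_two)
      refine h2.trans ?_
      filter_upwards [hcond t] with ω hω
      simp only [Pi.sub_apply, hcondF, hω]
      simp
    -- cross term vanishes
    have hcross : ∫ ω, ⟪g t ω - F' (x (t+1) ω), G (t+1) ω - F' (x (t+1) ω)⟫ ∂μ = 0 := by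
      have hco : ∀ ω, ⟪g t ω - F' (x (t+1) ω), G (t+1) ω - F' (x (t+1) ω)⟫
          = ∑ i : Fin d, (g t ω - F' (x (t+1) ω)) i * (G (t+1) ω - F' (x (t+1) ω)) i := by
        intro ω
        rw [PiLp.inner_apply]
        simp [RCLike.inner_apply, starRingEnd_apply, mul_comm]
      simp_rw [hco]
      have hiInt : ∀ i : Fin d, Integrable
          (fun ω => (g t ω - F' (x (t+1) ω)) i * (G (t+1) ω - F' (x (t+1) ω)) i) μ := by
        intro i
        refine PSGDaux.integrable_mul_of_memL2 ?_ ?_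
        · have := (EuclideanSpace.proj (𝕜 := ℝ) i).comp_memLp' hvL2
          exact this
        · have := (EuclideanSpace.proj (𝕜 := ℝ) i).comp_memLp' hwL2
          exact this
      rw [integral_finset_sum _ (fun i _ => hiInt i)]
      refine Finset.sum_eq_zero fun i _ => ?_
      have hviL2 : MemLp (fun ω => (g t ω - F' (x (t+1) ω)) i) 2 μ :=
        (EuclideanSpace.proj (𝕜 := ℝ) i).comp_memLp' hvL2
      have hwiL2 : MemLp (fun ω => (G (t+1) ω - F' (x (t+1) ω)) i) 2 μ :=
        (EuclideanSpace.proj (𝕜 := ℝ) i).comp_memLp' hwL2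
      have hwiInt : Integrable (fun ω => (G (t+1) ω - F' (x (t+1) ω)) i) μ :=
        hwiL2.integrable one_le_two
      have hvim : StronglyMeasurable[hbFiltration (g 0) G t]
          (fun ω => (g t ω - F' (x (t+1) ω)) i) :=
        (((EuclideanSpace.proj (𝕜 := ℝ) i).continuous.measurable).comp hvm).stronglyMeasurable
      have hwicond : μ[(fun ω => (G (t+1) ω - F' (x (t+1) ω)) i)|hbFiltration (g 0) G t]
          =ᵐ[μ] (fun _ => (0:ℝ)) := by
        have h2 := PSGDaux.condexp_clm (hmle t) (EuclideanSpace.proj (𝕜 := ℝ) i) hwInt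
        have h3 : μ[(fun ω => (G (t+1) ω - F' (x (t+1) ω)) i)|hbFiltration (g 0) G t]
            =ᵐ[μ] fun ω => (EuclideanSpace.proj (𝕜 := ℝ) i)
              ((μ[(fun ω => G (t+1) ω - F' (x (t+1) ω))|hbFiltration (g 0) G t]) ω) := h2
        refine h3.trans ?_
        filter_upwards [hcondw] with ω hω
        rw [hω]
        simp
      have hpull := condExp_mul_of_stronglyMeasurable_left (μ := μ) hvim (hiInt i) hwiInt
      have hzero : μ[(fun ω => (g t ω - F' (x (t+1) ω)) i * (G (t+1) ω - F' (x (t+1) ω)) i)|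
          hbFiltration (g 0) G t] =ᵐ[μ] (fun _ => (0:ℝ)) := by
        refine hpull.trans ?_
        filter_upwards [hwicond] with ω hω
        simp only [Pi.mul_apply]
        rw [hω]
        simp
      calc ∫ ω, (g t ω - F' (x (t+1) ω)) i * (G (t+1) ω - F' (x (t+1) ω)) i ∂μ
          = ∫ ω, (μ[(fun ω => (g t ω - F' (x (t+1) ω)) i * (G (t+1) ω - F' (x (t+1) ω)) i)|
              hbFiltration (g 0) G t]) ω ∂μ := (integral_condExp (hmle t)).symm
        _ = ∫ _ω, (0:ℝ) ∂μ := integral_congr_ae hzero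
        _ = 0 := integral_zero _ _
    -- variance bound
    have hw2le : ∫ ω, ‖G (t+1) ω - F' (x (t+1) ω)‖ ^ 2 ∂μ ≤ σ ^ 2 := by
      have h1 : ∫ ω, (μ[(fun ω' => ‖G (t+1) ω' - F' (x (t+1) ω')‖ ^ 2)|
          hbFiltration (g 0) G t]) ω ∂μ = ∫ ω, ‖G (t+1) ω - F' (x (t+1) ω)‖ ^ 2 ∂μ :=
        integral_condExp (hmle t)
      have h2 : ∫ ω, (μ[(fun ω' => ‖G (t+1) ω' - F' (x (t+1) ω')‖ ^ 2)|
          hbFiltration (g 0) G t]) ω ∂μ ≤ ∫ _ω, σ ^ 2 ∂μ :=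
        integral_mono_ae integrable_condExp (integrable_const _) (hvar t)
      rw [integral_const] at h2
      simp only [measure_univ, ENNReal.toReal_one, one_smul, smul_eq_mul, probReal_univ, one_mul] at h2
      linarith
    -- pointwise decomposition
    have hdecomp : ∀ ω, ‖g (t+1) ω - F' (x (t+1) ω)‖ ^ 2
        = (1 - β) ^ 2 * ‖g t ω - F' (x (t+1) ω)‖ ^ 2
          + 2 * ((1 - β) * β) * ⟪g t ω - F' (x (t+1) ω), G (t+1) ω - F' (x (t+1) ω)⟫
          + β ^ 2 * ‖G (t+1) ω - F' (x (t+1) ω)‖ ^ 2 := by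
      intro ω
      rw [show g (t+1) ω - F' (x (t+1) ω)
          = (1 - β) • (g t ω - F' (x (t+1) ω)) + β • (G (t+1) ω - F' (x (t+1) ω)) by
        have hid : (1 - β) • (g t ω - F' (x (t+1) ω)) + β • (G (t+1) ω - F' (x (t+1) ω))
            = (1 - β) • g t ω + β • G (t+1) ω - ((1 - β) + β) • F' (x (t+1) ω) := by
          rw [smul_sub, smul_sub, add_smul]; abel
        rw [hrecg t ω, hid, show (1 - β) + β = (1:ℝ) by ring, one_smul]]
      exact PSGDaux.norm_comb_sq _ _ _ _
    have hsplit2 : ∫ ω, ‖g (t+1) ω - F' (x (t+1) ω)‖ ^ 2 ∂μ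
        = (1 - β) ^ 2 * (∫ ω, ‖g t ω - F' (x (t+1) ω)‖ ^ 2 ∂μ)
          + 2 * ((1 - β) * β)
            * (∫ ω, ⟪g t ω - F' (x (t+1) ω), G (t+1) ω - F' (x (t+1) ω)⟫ ∂μ)
          + β ^ 2 * (∫ ω, ‖G (t+1) ω - F' (x (t+1) ω)‖ ^ 2 ∂μ) := by
      have hiA : Integrable (fun ω => (1 - β) ^ 2 * ‖g t ω - F' (x (t+1) ω)‖ ^ 2) μ :=
        hv2Int.const_mul _
      have hiB : Integrable (fun ω => 2 * ((1 - β) * β)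
          * ⟪g t ω - F' (x (t+1) ω), G (t+1) ω - F' (x (t+1) ω)⟫) μ := hvwInt.const_mul _
      have hiAB : Integrable (fun ω => (1 - β) ^ 2 * ‖g t ω - F' (x (t+1) ω)‖ ^ 2
          + 2 * ((1 - β) * β)
            * ⟪g t ω - F' (x (t+1) ω), G (t+1) ω - F' (x (t+1) ω)⟫) μ := hiA.add hiB
      have hiC : Integrable (fun ω => β ^ 2 * ‖G (t+1) ω - F' (x (t+1) ω)‖ ^ 2) μ :=
        hw2Int.const_mul _
      calc ∫ ω, ‖g (t+1) ω - F' (x (t+1) ω)‖ ^ 2 ∂μ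
          = ∫ ω, ((1 - β) ^ 2 * ‖g t ω - F' (x (t+1) ω)‖ ^ 2
            + 2 * ((1 - β) * β)
              * ⟪g t ω - F' (x (t+1) ω), G (t+1) ω - F' (x (t+1) ω)⟫
            + β ^ 2 * ‖G (t+1) ω - F' (x (t+1) ω)‖ ^ 2) ∂μ :=
            integral_congr_ae (Filter.Eventually.of_forall hdecomp)
        _ = _ := by
            rw [integral_add hiAB hiC, integral_add hiA hiB,
              integral_const_mul, integral_const_mul, integral_const_mul]
    -- bound the (1-β)² term pointwise then integrate
    have hvpt : ∀ ω, (1 - β) ^ 2 * ‖g t ω - F' (x (t+1) ω)‖ ^ 2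
        ≤ (1 - β) * ‖g t ω - F' (x t ω)‖ ^ 2
          + (1 - β) ^ 2 / β * L ^ 2 * ‖x (t+1) ω - x t ω‖ ^ 2 := by
      intro ω
      have h5 : ‖g t ω - F' (x (t+1) ω)‖
          ≤ ‖g t ω - F' (x t ω)‖ + L * ‖x (t+1) ω - x t ω‖ := by
        have h6 : g t ω - F' (x (t+1) ω)
            = (g t ω - F' (x t ω)) + (F' (x t ω) - F' (x (t+1) ω)) := by abel
        rw [h6]
        refine (norm_add_le _ _).trans ?_
        have h7 : ‖F' (x t ω) - F' (x (t+1) ω)‖ ≤ L * ‖x t ω - x (t+1) ω‖ := hLip _ _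
        rw [norm_sub_rev (x t ω)] at h7
        linarith
      have h8 : ‖g t ω - F' (x (t+1) ω)‖ ^ 2
          ≤ (‖g t ω - F' (x t ω)‖ + L * ‖x (t+1) ω - x t ω‖) ^ 2 :=
        pow_le_pow_left₀ (norm_nonneg _) h5 2
      have h9 := PSGDaux.young2 (A := ‖g t ω - F' (x t ω)‖)
        (B := L * ‖x (t+1) ω - x t ω‖) hβ0 hβ1
      have h10 := mul_le_mul_of_nonneg_left h8 (sq_nonneg (1 - β))
      calc (1 - β) ^ 2 * ‖g t ω - F' (x (t+1) ω)‖ ^ 2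
          ≤ (1 - β) ^ 2 * (‖g t ω - F' (x t ω)‖ + L * ‖x (t+1) ω - x t ω‖) ^ 2 := h10
        _ ≤ (1 - β) * ‖g t ω - F' (x t ω)‖ ^ 2
            + (1 - β) ^ 2 / β * (L * ‖x (t+1) ω - x t ω‖) ^ 2 := h9
        _ = (1 - β) * ‖g t ω - F' (x t ω)‖ ^ 2
            + (1 - β) ^ 2 / β * L ^ 2 * ‖x (t+1) ω - x t ω‖ ^ 2 := by ring
    have hvle : (1 - β) ^ 2 * (∫ ω, ‖g t ω - F' (x (t+1) ω)‖ ^ 2 ∂μ)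
        ≤ (1 - β) * (∫ ω, ‖g t ω - F' (x t ω)‖ ^ 2 ∂μ)
          + (1 - β) ^ 2 / β * L ^ 2 * (∫ ω, ‖x (t+1) ω - x t ω‖ ^ 2 ∂μ) := by
      have hiA : Integrable (fun ω => (1 - β) ^ 2 * ‖g t ω - F' (x (t+1) ω)‖ ^ 2) μ :=
        hv2Int.const_mul _
      have hiD : Integrable (fun ω => (1 - β) * ‖g t ω - F' (x t ω)‖ ^ 2) μ :=
        (heInt t).const_mul _
      have hiE : Integrable (fun ω => (1 - β) ^ 2 / β * L ^ 2 * ‖x (t+1) ω - x t ω‖ ^ 2) μ :=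
        (hr2Int t).const_mul _
      have hiDE : Integrable (fun ω => (1 - β) * ‖g t ω - F' (x t ω)‖ ^ 2
          + (1 - β) ^ 2 / β * L ^ 2 * ‖x (t+1) ω - x t ω‖ ^ 2) μ := hiD.add hiE
      have h11 := integral_mono hiA hiDE hvpt
      rw [integral_const_mul] at h11
      rw [integral_add hiD hiE, integral_const_mul, integral_const_mul] at h11
      exact h11
    have hw2le' : β ^ 2 * (∫ ω, ‖G (t+1) ω - F' (x (t+1) ω)‖ ^ 2 ∂μ) ≤ β ^ 2 * σ ^ 2 :=
      mul_le_mul_of_nonneg_left hw2le (sq_nonneg β)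
    rw [hsplit2, hcross]
    linarith [hvle, hw2le']

  -- COMBINE
  have hB0 : ∀ t, 0 ≤ ∫ ω, ‖g t ω - F' (x t ω)‖ ^ 2 ∂μ :=
    fun t => integral_nonneg fun ω => by positivity
  have hR0 : ∀ t, 0 ≤ ∫ ω, ‖x (t+1) ω - x t ω‖ ^ 2 ∂μ :=
    fun t => integral_nonneg fun ω => by positivity
  have hΛstep : ∀ t, (∫ ω, (F (x (t+1) ω) - F xstar) ∂μ)
        + η / β * (∫ ω, ‖g (t+1) ω - F' (x (t+1) ω)‖ ^ 2 ∂μ)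
      ≤ (1 - α) * ((∫ ω, (F (x t ω) - F xstar) ∂μ)
        + η / β * (∫ ω, ‖g t ω - F' (x t ω)‖ ^ 2 ∂μ)) + β * η * σ ^ 2 := by
    intro t
    have h1 := hstepA t
    have h2 := mul_le_mul_of_nonneg_left (hstepB t) (show (0:ℝ) ≤ η / β by positivity)
    have hc1 : (η / 2 + η / β * (1 - β)) * (∫ ω, ‖g t ω - F' (x t ω)‖ ^ 2 ∂μ)
        ≤ (1 - α) * (η / β) * (∫ ω, ‖g t ω - F' (x t ω)‖ ^ 2 ∂μ) := by
      refine mul_le_mul_of_nonneg_right ?_ (hB0 t)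
      rw [← sub_nonneg]
      have heq : (1 - α) * (η / β) - (η / 2 + η / β * (1 - β)) = η * (β - 2 * α) / (2 * β) := by
        field_simp; ring
      rw [heq]
      exact div_nonneg (mul_nonneg hη0.le (by linarith)) (by linarith)
    have hc2 : η / β * ((1 - β) ^ 2 / β * L ^ 2) * (∫ ω, ‖x (t+1) ω - x t ω‖ ^ 2 ∂μ)
        ≤ (1 / (2 * η) - L / 2) * (∫ ω, ‖x (t+1) ω - x t ω‖ ^ 2 ∂μ) := by
      refine mul_le_mul_of_nonneg_right ?_ (hR0 t)
      have h4ηL : η * (4 * L) ≤ β := (le_div_iff₀ (by positivity)).mp hη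
      have h5 : (4 * (η * L)) ^ 2 * (1 - β) ^ 2 ≤ β ^ 2 * 1 := by
        refine mul_le_mul ?_ (by nlinarith) (sq_nonneg _) (sq_nonneg β)
        nlinarith [sq_nonneg (4 * (η * L)), mul_pos hη0 hL]
      rw [← sub_nonneg]
      have heq : 1 / (2 * η) - L / 2 - η / β * ((1 - β) ^ 2 / β * L ^ 2)
          = (8 * β ^ 2 - 8 * (L * η) * β ^ 2 - 16 * (η * L) ^ 2 * (1 - β) ^ 2)
            / (16 * η * β ^ 2) := by
        field_simp; ring
      rw [heq]
      refine div_nonneg ?_ (by positivity)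
      nlinarith [h5, sq_nonneg β, hLη]
    have heqσ : η / β * (β ^ 2 * σ ^ 2) = β * η * σ ^ 2 := by
      field_simp
    nlinarith [h1, h2, hc1, hc2, heqσ]
  -- INDUCTION
  have hpow : ∀ T : ℕ, (∫ ω, (F (x T ω) - F xstar) ∂μ)
        + η / β * (∫ ω, ‖g T ω - F' (x T ω)‖ ^ 2 ∂μ)
      ≤ (1 - α) ^ T * ((∫ ω, (F (x 0 ω) - F xstar) ∂μ)
        + η / β * (∫ ω, ‖g 0 ω - F' (x 0 ω)‖ ^ 2 ∂μ)) + β * η * σ ^ 2 / α := by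
    intro T
    induction T with
    | zero =>
      have h1 : (0:ℝ) ≤ β * η * σ ^ 2 / α := by positivity
      rw [pow_zero, one_mul]
      linarith
    | succ T ih =>
      have h1 := hΛstep T
      have h2 := mul_le_mul_of_nonneg_left ih (show (0:ℝ) ≤ 1 - α by linarith)
      have h3 : (1 - α) * ((1 - α) ^ T * ((∫ ω, (F (x 0 ω) - F xstar) ∂μ)
          + η / β * (∫ ω, ‖g 0 ω - F' (x 0 ω)‖ ^ 2 ∂μ)) + β * η * σ ^ 2 / α) + β * η * σ ^ 2
          = (1 - α) ^ (T+1) * ((∫ ω, (F (x 0 ω) - F xstar) ∂μ)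
          + η / β * (∫ ω, ‖g 0 ω - F' (x 0 ω)‖ ^ 2 ∂μ)) + β * η * σ ^ 2 / α := by
        rw [pow_succ]
        field_simp
        ring
      linarith
  -- CONCLUDE
  have hsplit : ∀ t : ℕ, (∫ ω, (F (x t ω) - F xstar + η / β * ‖g t ω - F' (x t ω)‖ ^ 2) ∂μ)
      = (∫ ω, (F (x t ω) - F xstar) ∂μ) + η / β * (∫ ω, ‖g t ω - F' (x t ω)‖ ^ 2 ∂μ) := by
    intro t
    rw [integral_add (hFsubInt t) ((heInt t).const_mul (η / β)), integral_const_mul]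
  rw [hsplit T, hsplit 0]
  exact hpow T
end
end
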